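/- Let E be a real inner product space, f : E → ℝ with infimum value f* (so f(x) ≥ f* for all x), θ ∈ E, and let g_y, g_a ∈ E with g_y the gradient of f at θ. Set θ⁺ = θ − η(g_y + g_a) with step size η ≥ 0. Assume: (i) the smoothness inequality f(θ⁺) ≤ f(θ) − η⟪g_y, g_y + g_a⟫ + (βη²/2)‖g_y + g_a‖²; (ii) the Polyak–Łojasiewicz condition ‖g_y‖² ≥ 2μ(f(θ) − f*) with μ > 0; (iii) the alignment condition ⟪g_y, g_a⟫ ≥ ρ‖g_y‖² with ρ ≥ 0; (iv) the norm control ‖g_y + g_a‖² ≤ B_∇‖g_y‖²; and (v) 1 + ρ − βηB_∇/2 > 0. Then f(θ⁺) − f* ≤ [1 − 2ημ(1 + ρ − βηB_∇/2)] (f(θ) − f*). -/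
import Mathlib


/-!
STATEMENT 11: Aligned auxiliary gradients improve task-loss contraction. In a real
inner product space, with θ⁺ = θ − η(g_y + g_a), under (i) the smoothness
inequality, (ii) the PL condition ‖g_y‖² ≥ 2μ(f(θ) − f*), (iii) the alignment
condition ⟪g_y, g_a⟫ ≥ ρ‖g_y‖², (iv) the norm control ‖g_y + g_a‖² ≤ B_∇‖g_y‖²,
and (v) 1 + ρ − βηB_∇/2 > 0, we have
`f(θ⁺) − f* ≤ [1 − 2ημ(1 + ρ − βηB_∇/2)] (f(θ) − f*)`.
-/

open RealInnerProductSpace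

theorem aligned_auxiliary_gradient_contraction
    {E : Type*} [NormedAddCommGroup E] [InnerProductSpace ℝ E] [CompleteSpace E]
    (f : E → ℝ) (fstar : ℝ) (hfstar : ∀ x : E, fstar ≤ f x)
    (θ gy ga : E) (η β μ ρ B : ℝ)
    (hη : 0 ≤ η) (hβ : 0 < β) (hμ : 0 < μ) (hρ : 0 ≤ ρ) (hB : 0 < B)
    (hgrad : gradient f θ = gy)
    -- (i) smoothness inequality along the update
    (hsmooth : f (θ - η • (gy + ga)) ≤
      f θ - η * ⟪gy, gy + ga⟫ + β * η ^ 2 / 2 * ‖gy + ga‖ ^ 2)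
    -- (ii) Polyak–Łojasiewicz condition
    (hPL : 2 * μ * (f θ - fstar) ≤ ‖gy‖ ^ 2)
    -- (iii) alignment condition
    (halign : ρ * ‖gy‖ ^ 2 ≤ ⟪gy, ga⟫)
    -- (iv) norm control
    (hnorm : ‖gy + ga‖ ^ 2 ≤ B * ‖gy‖ ^ 2)
    -- (v) step-size condition
    (hstep : 0 < 1 + ρ - β * η * B / 2) :
    f (θ - η • (gy + ga)) - fstar ≤
      (1 - 2 * η * μ * (1 + ρ - β * η * B / 2)) * (f θ - fstar) := by
  have hinner : ⟪gy, gy + ga⟫ = ‖gy‖ ^ 2 + ⟪gy, ga⟫ := by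
    rw [inner_add_right, real_inner_self_eq_norm_sq]
  have h1 : (1 + ρ) * ‖gy‖ ^ 2 ≤ ⟪gy, gy + ga⟫ := by
    rw [hinner]; nlinarith
  have hc : 0 ≤ η * (1 + ρ - β * η * B / 2) := by positivity
  have h2 : f (θ - η • (gy + ga)) ≤
      f θ - η * (1 + ρ - β * η * B / 2) * ‖gy‖ ^ 2 := by
    have hb2 : β * η ^ 2 / 2 * ‖gy + ga‖ ^ 2 ≤ β * η ^ 2 / 2 * (B * ‖gy‖ ^ 2) := by
      have : (0:ℝ) ≤ β * η ^ 2 / 2 := by positivity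
      exact mul_le_mul_of_nonneg_left hnorm this
    nlinarith [mul_le_mul_of_nonneg_left h1 hη]
  have h3 : η * (1 + ρ - β * η * B / 2) * (2 * μ * (f θ - fstar))
      ≤ η * (1 + ρ - β * η * B / 2) * ‖gy‖ ^ 2 :=
    mul_le_mul_of_nonneg_left hPL hc
  nlinarith
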